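/- Let 1 < p ≤ 2 and let (λ_m)_{m∈ℤ} be a sequence of positive reals with sup_{t>0} t·#{m ∈ ℤ : λ_m^{-1} ≥ t} < ∞, where # denotes counting measure. Then denoting M := sup_{t>0} t·#{m : λ_m^{-1} ≥ t}, for all f ∈ L^p(𝕋): (Σ_{m∈ℤ} |f̂(m)|^p λ_m^{-(2-p)})^{1/p} ≤ C·M^{(2−p)/p}·‖f‖_{L^p(𝕋)}. -/

import Mathlib

open MeasureTheory ENNReal Set AddCircle

instance : Fact ((0 : ℝ) < 1) := ⟨zero_lt_one⟩

namespace PaleyAux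

/-- Lintegral of `t^q` over `Ioo 0 A`. -/
lemma lint_Ioo {q : ℝ} (hq : -1 < q) {A : ℝ} (hA : 0 ≤ A) :
    ∫⁻ t in Ioo (0:ℝ) A, ENNReal.ofReal (t ^ q) = ENNReal.ofReal (A ^ (q+1) / (q+1)) := by
  rcases hA.eq_or_lt with rfl | hA
  · simp [Real.zero_rpow (by linarith : q + 1 ≠ 0)]
  · have hint : IntegrableOn (fun t : ℝ => t ^ q) (Ioo 0 A) volume := by
      have h := intervalIntegral.intervalIntegrable_rpow' (r := q) (a := 0) (b := A) hq
      rw [intervalIntegrable_iff_integrableOn_Ioc_of_le hA.le] at h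
      exact h.mono_set Ioo_subset_Ioc_self
    rw [← ofReal_integral_eq_lintegral_ofReal hint
      ((ae_restrict_iff' measurableSet_Ioo).2 (Filter.Eventually.of_forall
        fun t ht => Real.rpow_nonneg ht.1.le q))]
    congr 1
    rw [← integral_Ioc_eq_integral_Ioo, ← intervalIntegral.integral_of_le hA.le,
      integral_rpow (Or.inl hq)]
    simp [Real.zero_rpow (by linarith : q + 1 ≠ 0)]

/-- Lintegral of `t^q` over `Ici A`, `A > 0`, `q < -1`. -/
lemma lint_Ici {q : ℝ} (hq : q < -1) {A : ℝ} (hA : 0 < A) :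
    ∫⁻ t in Ici A, ENNReal.ofReal (t ^ q) = ENNReal.ofReal (A ^ (q+1) / (-(q+1))) := by
  rw [show (volume : Measure ℝ).restrict (Ici A) = volume.restrict (Ioi A) from (Measure.restrict_congr_set Ioi_ae_eq_Ici).symm]
  have hint : IntegrableOn (fun t : ℝ => t ^ q) (Ioi A) volume :=
    integrableOn_Ioi_rpow_of_lt hq hA
  rw [← ofReal_integral_eq_lintegral_ofReal hint
    ((ae_restrict_iff' measurableSet_Ioi).2 (Filter.Eventually.of_forall
      fun t ht => Real.rpow_nonneg (hA.le.trans (le_of_lt ht)) q))]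
  rw [integral_Ioi_rpow_of_lt hq hA]
  congr 1
  rw [div_neg, neg_div]

lemma norm_fourier_apply (n : ℤ) (x : AddCircle (1:ℝ)) : ‖fourier n x‖ = 1 := by
  rw [fourier_apply]
  exact Circle.norm_coe _

lemma norm_fourierCoeff_le (f : AddCircle (1:ℝ) → ℂ) (m : ℤ) :
    ‖fourierCoeff f m‖ ≤ ∫ x, ‖f x‖ ∂haarAddCircle := by
  refine (norm_integral_le_integral_norm _).trans_eq ?_
  congr 1
  ext x
  rw [norm_smul, norm_fourier_apply, one_mul]

lemma integrable_fourier_smul {f : AddCircle (1:ℝ) → ℂ} (hf : Integrable f haarAddCircle)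
    (m : ℤ) : Integrable (fun x => (fourier m x : ℂ) • f x) haarAddCircle := by
  simp_rw [smul_eq_mul]
  exact hf.bdd_mul ((fourier m).continuous.aestronglyMeasurable)
    (Filter.Eventually.of_forall fun x => (norm_fourier_apply m x).le)

lemma fourierCoeff_add {f₁ f₂ : AddCircle (1:ℝ) → ℂ} (h₁ : Integrable f₁ haarAddCircle)
    (h₂ : Integrable f₂ haarAddCircle) (m : ℤ) :
    fourierCoeff (f₁ + f₂) m = fourierCoeff f₁ m + fourierCoeff f₂ m := by
  unfold fourierCoeff
  simp_rw [Pi.add_apply, smul_add]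
  exact integral_add (integrable_fourier_smul h₁ (-m)) (integrable_fourier_smul h₂ (-m))

lemma fourierCoeff_congr_ae {f g : AddCircle (1:ℝ) → ℂ}
    (h : f =ᵐ[haarAddCircle] g) (m : ℤ) : fourierCoeff f m = fourierCoeff g m := by
  unfold fourierCoeff
  exact integral_congr_ae (h.mono fun x hx => by simp only []; rw [hx])

/-- Parseval in `ℝ≥0∞` form. -/
lemma parseval_ennreal {f : AddCircle (1:ℝ) → ℂ} (hf : MemLp f 2 haarAddCircle) :
    ∑' m : ℤ, ENNReal.ofReal (‖fourierCoeff f m‖ ^ 2) =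
      ∫⁻ x, ENNReal.ofReal (‖f x‖ ^ 2) ∂haarAddCircle := by
  set F := hf.toLp f with hF
  have hae : (F : AddCircle (1:ℝ) → ℂ) =ᵐ[haarAddCircle] f := hf.coeFn_toLp
  have hcoeff : ∀ m : ℤ, fourierCoeff (F : AddCircle (1:ℝ) → ℂ) m = fourierCoeff f m :=
    fun m => fourierCoeff_congr_ae hae m
  have hsum : Summable fun m : ℤ => ‖fourierCoeff (F : AddCircle (1:ℝ) → ℂ) m‖ ^ 2 := by
    have h1 := lp.memℓp (fourierBasis.repr F)
    rw [memℓp_gen_iff (by norm_num : (0:ℝ) < (2:ℝ≥0∞).toReal)] at h1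
    have : ∀ m : ℤ, ‖fourierBasis.repr F m‖ ^ ((2:ℝ≥0∞).toReal)
        = ‖fourierCoeff (F : AddCircle (1:ℝ) → ℂ) m‖ ^ 2 := by
      intro m
      rw [fourierBasis_repr]
      norm_num
    exact (summable_congr this).mp h1
  calc ∑' m : ℤ, ENNReal.ofReal (‖fourierCoeff f m‖ ^ 2)
      = ∑' m : ℤ, ENNReal.ofReal (‖fourierCoeff (F : AddCircle (1:ℝ) → ℂ) m‖ ^ 2) := by
        simp_rw [hcoeff]
    _ = ENNReal.ofReal (∑' m : ℤ, ‖fourierCoeff (F : AddCircle (1:ℝ) → ℂ) m‖ ^ 2) :=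
        (ENNReal.ofReal_tsum_of_nonneg (fun m => sq_nonneg _) hsum).symm
    _ = ENNReal.ofReal (∫ x, ‖(F : AddCircle (1:ℝ) → ℂ) x‖ ^ 2 ∂haarAddCircle) := by
        rw [tsum_sq_fourierCoeff]
    _ = ∫⁻ x, ENNReal.ofReal (‖(F : AddCircle (1:ℝ) → ℂ) x‖ ^ 2) ∂haarAddCircle := by
        apply ofReal_integral_eq_lintegral_ofReal
        · have := (Lp.memLp F).integrable_norm_rpow two_ne_zero ENNReal.ofNat_ne_top
          simpa [Real.rpow_natCast] using this
        · exact Filter.Eventually.of_forall fun x => sq_nonneg _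
    _ = ∫⁻ x, ENNReal.ofReal (‖f x‖ ^ 2) ∂haarAddCircle :=
        lintegral_congr_ae (hae.mono fun x hx => by simp only []; rw [hx])

section SumW

variable {lam : ℤ → ℝ} {M : ℝ}

/-- Weighted count of indices with small `λ⁻¹`. -/
lemma sum_w_le (hlam : ∀ m, 0 < lam m) (hM : 0 < M)
    (hcount : ∀ t : ℝ, 0 < t →
      ENNReal.ofReal t * Measure.count {m : ℤ | t ≤ (lam m)⁻¹} ≤ ENNReal.ofReal M)
    (T : ℝ) :
    (Measure.count.withDensity fun m : ℤ => ENNReal.ofReal ((lam m)⁻¹ ^ (2:ℝ)))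
        {m : ℤ | (lam m)⁻¹ < T} ≤ ENNReal.ofReal (2 * (M * T)) := by
  rcases le_or_gt T 0 with hT | hT
  · have : {m : ℤ | (lam m)⁻¹ < T} = ∅ := by
      ext m
      simp only [mem_setOf_eq, mem_empty_iff_false, iff_false, not_lt]
      exact hT.trans (inv_pos.2 (hlam m)).le
    rw [this, measure_empty]
    exact zero_le
  · set S : Set ℤ := {m : ℤ | (lam m)⁻¹ < T}
    rw [withDensity_apply _ (MeasurableSet.of_discrete)]
    have key := lintegral_rpow_eq_lintegral_meas_le_mul (Measure.count.restrict S)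
      (f := fun m : ℤ => (lam m)⁻¹)
      (Filter.Eventually.of_forall fun m => (inv_pos.2 (hlam m)).le)
      (Measurable.of_discrete.aemeasurable) (p := 2) (by norm_num)
    rw [show ∫⁻ m in S, ENNReal.ofReal ((lam m)⁻¹ ^ (2:ℝ)) ∂Measure.count
        = ∫⁻ m, ENNReal.ofReal ((lam m)⁻¹ ^ (2:ℝ)) ∂(Measure.count.restrict S) from rfl, key]
    have hbound : ∫⁻ t in Ioi (0:ℝ),
        (Measure.count.restrict S) {m : ℤ | t ≤ (lam m)⁻¹} * ENNReal.ofReal (t ^ ((2:ℝ) - 1))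
        ≤ ENNReal.ofReal M * ENNReal.ofReal T := by
      have hmono : ∀ t ∈ Ioi (0:ℝ),
          (Measure.count.restrict S) {m : ℤ | t ≤ (lam m)⁻¹} * ENNReal.ofReal (t ^ ((2:ℝ) - 1))
          ≤ (Ioo (0:ℝ) T).indicator (fun _ => ENNReal.ofReal M) t := by
        intro t ht
        rw [Measure.restrict_apply (MeasurableSet.of_discrete)]
        have ht' : (0:ℝ) < t := ht
        rw [show t ^ ((2:ℝ) - 1) = t by norm_num]
        rcases lt_or_ge t T with h | h
        · rw [indicator_of_mem (by exact ⟨ht', h⟩)]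
          calc Measure.count ({m : ℤ | t ≤ (lam m)⁻¹} ∩ S) * ENNReal.ofReal t
              ≤ Measure.count {m : ℤ | t ≤ (lam m)⁻¹} * ENNReal.ofReal t :=
                mul_le_mul_left (measure_mono inter_subset_left) _
            _ ≤ ENNReal.ofReal M := by rw [mul_comm]; exact hcount t ht'
        · have : {m : ℤ | t ≤ (lam m)⁻¹} ∩ S = ∅ := by
            ext m
            simp only [mem_inter_iff, mem_setOf_eq, mem_empty_iff_false, iff_false, not_and,
              not_lt, S]
            intro h1
            exact h.trans h1
          rw [this, measure_empty, zero_mul]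
          exact zero_le
      calc ∫⁻ t in Ioi (0:ℝ), (Measure.count.restrict S) {m : ℤ | t ≤ (lam m)⁻¹}
              * ENNReal.ofReal (t ^ ((2:ℝ) - 1))
          ≤ ∫⁻ t in Ioi (0:ℝ), (Ioo (0:ℝ) T).indicator (fun _ => ENNReal.ofReal M) t :=
            lintegral_mono_ae ((ae_restrict_iff' measurableSet_Ioi).2
              (Filter.Eventually.of_forall hmono))
        _ = ENNReal.ofReal M * volume (Ioo (0:ℝ) T) := by
            rw [lintegral_indicator measurableSet_Ioo, Measure.restrict_restrict
              measurableSet_Ioo, setLIntegral_const, inter_eq_self_of_subset_left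
              (Ioo_subset_Ioi_self), Real.volume_Ioo, mul_comm]
        _ = ENNReal.ofReal M * ENNReal.ofReal T := by rw [Real.volume_Ioo, sub_zero]
    calc ENNReal.ofReal 2 * ∫⁻ t in Ioi (0:ℝ),
            (Measure.count.restrict S) {m : ℤ | t ≤ (lam m)⁻¹} * ENNReal.ofReal (t ^ ((2:ℝ) - 1))
        ≤ ENNReal.ofReal 2 * (ENNReal.ofReal M * ENNReal.ofReal T) := mul_le_mul_right hbound _
      _ = ENNReal.ofReal (2 * (M * T)) := by
          rw [← ENNReal.ofReal_mul hM.le, ← ENNReal.ofReal_mul (by norm_num)]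

end SumW

section Cheb

variable {lam : ℤ → ℝ} {M : ℝ}

/-- Chebyshev-type bound for the weighted counting measure. -/
lemma cheb_sq (hlam : ∀ m, 0 < lam m) {c : ℤ → ℝ} {s : ℝ} (hs : 0 < s) :
    (Measure.count.withDensity fun m : ℤ => ENNReal.ofReal ((lam m)⁻¹ ^ (2:ℝ)))
        {m : ℤ | s < lam m * c m}
      ≤ ENNReal.ofReal (s⁻¹ ^ 2) * ∑' m : ℤ, ENNReal.ofReal (c m ^ 2) := by
  set A := {m : ℤ | s < lam m * c m}
  rw [withDensity_apply _ (MeasurableSet.of_discrete)]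
  have hpt : ∀ m ∈ A, ENNReal.ofReal ((lam m)⁻¹ ^ (2:ℝ))
      ≤ ENNReal.ofReal (s⁻¹ ^ 2) * ENNReal.ofReal (c m ^ 2) := by
    intro m hm
    have hm' : s < lam m * c m := hm
    have hc : 0 < c m := by
      by_contra hc
      push_neg at hc
      nlinarith [(hlam m), hm']
    have hinv : (lam m)⁻¹ ≤ c m / s := by
      rw [inv_le_iff_one_le_mul₀ (hlam m), div_mul_eq_mul_div, le_div_iff₀ hs, one_mul, mul_comm]
      exact hm'.le
    have h2 : (lam m)⁻¹ ^ (2:ℝ) = ((lam m)⁻¹) ^ 2 := by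
      rw [show ((2:ℝ)) = ((2:ℕ):ℝ) by norm_num, Real.rpow_natCast]
    rw [h2, ← ENNReal.ofReal_mul (by positivity)]
    apply ENNReal.ofReal_le_ofReal
    have : (lam m)⁻¹ ^ 2 ≤ (c m / s) ^ 2 := by
      apply pow_le_pow_left₀ (inv_pos.2 (hlam m)).le hinv
    calc ((lam m)⁻¹) ^ 2 ≤ (c m / s) ^ 2 := this
      _ = s⁻¹ ^ 2 * c m ^ 2 := by field_simp
  calc ∫⁻ m in A, ENNReal.ofReal ((lam m)⁻¹ ^ (2:ℝ)) ∂Measure.count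
      ≤ ∫⁻ m in A, ENNReal.ofReal (s⁻¹ ^ 2) * ENNReal.ofReal (c m ^ 2) ∂Measure.count :=
        setLIntegral_mono Measurable.of_discrete hpt
    _ ≤ ∫⁻ m, ENNReal.ofReal (s⁻¹ ^ 2) * ENNReal.ofReal (c m ^ 2) ∂Measure.count :=
        setLIntegral_le_lintegral _ _
    _ = ENNReal.ofReal (s⁻¹ ^ 2) * ∑' m : ℤ, ENNReal.ofReal (c m ^ 2) := by
        rw [lintegral_count, ENNReal.tsum_mul_left]

end Cheb

/-- The per-level estimate coming from the weak (1,1) and strong (2,2) bounds. -/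
lemma per_t {p : ℝ} (hp1 : 1 < p) {lam : ℤ → ℝ} (hlam : ∀ m, 0 < lam m)
    {M : ℝ} (hM : 0 < M)
    (hcount : ∀ t : ℝ, 0 < t →
      ENNReal.ofReal t * Measure.count {m : ℤ | t ≤ (lam m)⁻¹} ≤ ENNReal.ofReal M)
    {g : AddCircle (1:ℝ) → ℂ} (hgm : StronglyMeasurable g)
    (hgi : Integrable g haarAddCircle) {t : ℝ} (ht : 0 < t) :
    (Measure.count.withDensity fun m : ℤ => ENNReal.ofReal ((lam m)⁻¹ ^ (2:ℝ)))
        {m : ℤ | t < lam m * ‖fourierCoeff g m‖} * ENNReal.ofReal (t ^ (p-1))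
      ≤ ENNReal.ofReal (4*M) * ∫⁻ x, (if M*t < ‖g x‖ then
            ENNReal.ofReal ‖g x‖ * ENNReal.ofReal (t ^ (p-2)) else 0) ∂haarAddCircle
        + ENNReal.ofReal 4 * ∫⁻ x, (if M*t < ‖g x‖ then 0 else
            ENNReal.ofReal (‖g x‖^2) * ENNReal.ofReal (t ^ (p-3))) ∂haarAddCircle := by
  set ν := Measure.count.withDensity fun m : ℤ => ENNReal.ofReal ((lam m)⁻¹ ^ (2:ℝ)) with hν
  set cut : Set (AddCircle (1:ℝ)) := {x | M*t < ‖g x‖} with hcut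
  have hcutm : MeasurableSet cut := measurableSet_lt measurable_const hgm.measurable.norm
  set g₁ := cut.indicator g with hg1
  set g₂ := cutᶜ.indicator g with hg2
  have hgi₁ : Integrable g₁ haarAddCircle := hgi.indicator hcutm
  have hgi₂ : Integrable g₂ haarAddCircle := hgi.indicator hcutm.compl
  have hsplit : g = g₁ + g₂ := (indicator_self_add_compl cut g).symm
  have hcoeff : ∀ m : ℤ, ‖fourierCoeff g m‖ ≤ ‖fourierCoeff g₁ m‖ + ‖fourierCoeff g₂ m‖ := by
    intro m
    conv_lhs => rw [hsplit, fourierCoeff_add hgi₁ hgi₂]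
    exact norm_add_le _ _
  have hsub : {m : ℤ | t < lam m * ‖fourierCoeff g m‖} ⊆
      {m : ℤ | t/2 < lam m * ‖fourierCoeff g₁ m‖} ∪
      {m : ℤ | t/2 < lam m * ‖fourierCoeff g₂ m‖} := by
    intro m hm
    by_contra hcon
    simp only [mem_union, mem_setOf_eq, not_or, not_lt] at hcon
    have h1 := hcon.1
    have h2 := hcon.2
    have := hcoeff m
    have hm' : t < lam m * ‖fourierCoeff g m‖ := hm
    nlinarith [(hlam m), norm_nonneg (fourierCoeff g m)]
  have hIoi := measure_union_le (μ := ν) {m : ℤ | t/2 < lam m * ‖fourierCoeff g₁ m‖}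
    {m : ℤ | t/2 < lam m * ‖fourierCoeff g₂ m‖}
  -- weak (1,1) bound for g₁
  set N₁ : ℝ := ∫ x, ‖g₁ x‖ ∂haarAddCircle with hN₁
  have hN₁nn : 0 ≤ N₁ := integral_nonneg fun x => norm_nonneg _
  have hb1 : ν {m : ℤ | t/2 < lam m * ‖fourierCoeff g₁ m‖}
      ≤ ENNReal.ofReal (2 * (M * (N₁ * (2/t)))) := by
    refine le_trans (measure_mono ?_) (sum_w_le hlam hM hcount (N₁ * (2/t)))
    intro m hm
    have hm' : t/2 < lam m * ‖fourierCoeff g₁ m‖ := hm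
    have hle : ‖fourierCoeff g₁ m‖ ≤ N₁ := norm_fourierCoeff_le g₁ m
    show (lam m)⁻¹ < N₁ * (2/t)
    have hl := hlam m
    have hinv : (lam m)⁻¹ * lam m = 1 := inv_mul_cancel₀ hl.ne'
    have hkey : (lam m)⁻¹ * (t/2) < ‖fourierCoeff g₁ m‖ := by
      calc (lam m)⁻¹ * (t/2) < (lam m)⁻¹ * (lam m * ‖fourierCoeff g₁ m‖) :=
            mul_lt_mul_of_pos_left hm' (inv_pos.2 hl)
        _ = ‖fourierCoeff g₁ m‖ := by rw [← mul_assoc, hinv, one_mul]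
    rw [← lt_div_iff₀ (by positivity : (0:ℝ) < t/2)] at hkey
    calc (lam m)⁻¹ < ‖fourierCoeff g₁ m‖ / (t/2) := hkey
      _ ≤ N₁ / (t/2) := by gcongr
      _ = N₁ * (2/t) := by field_simp
  -- strong (2,2) bound for g₂
  have hmem2 : MemLp g₂ 2 haarAddCircle := by
    refine MemLp.of_bound (hgm.indicator hcutm.compl).aestronglyMeasurable (M*t)
      (Filter.Eventually.of_forall fun x => ?_)
    by_cases hx : x ∈ cutᶜ
    · rw [hg2, indicator_of_mem hx]
      exact not_lt.mp hx
    · rw [hg2, indicator_of_notMem hx, norm_zero]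
      positivity
  have hb2 : ν {m : ℤ | t/2 < lam m * ‖fourierCoeff g₂ m‖}
      ≤ ENNReal.ofReal ((t/2)⁻¹ ^ 2) * ∫⁻ x, ENNReal.ofReal (‖g₂ x‖^2) ∂haarAddCircle := by
    refine le_trans (cheb_sq hlam (half_pos ht)) ?_
    rw [parseval_ennreal hmem2]
  -- combine
  set I₂ := ∫⁻ x, ENNReal.ofReal (‖g₂ x‖^2) ∂haarAddCircle with hI₂
  have ht2 : t ^ (p-2) = t ^ (p-1) * t⁻¹ := by
    rw [show p-2 = (p-1) + (-1) by ring, Real.rpow_add ht, Real.rpow_neg_one]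
  have ht3 : t ^ (p-3) = t ^ (p-1) * t⁻¹ * t⁻¹ := by
    rw [show p-3 = (p-1) + (-1) + (-1) by ring, Real.rpow_add ht, Real.rpow_add ht,
      Real.rpow_neg_one]
  have htp1 : (0:ℝ) ≤ t ^ (p-1) := Real.rpow_nonneg ht.le _
  have hterm1 : ENNReal.ofReal (2 * (M * (N₁ * (2/t)))) * ENNReal.ofReal (t ^ (p-1))
      = ENNReal.ofReal (4*M) * ∫⁻ x, (if M*t < ‖g x‖ then
          ENNReal.ofReal ‖g x‖ * ENNReal.ofReal (t ^ (p-2)) else 0) ∂haarAddCircle := by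
    have hN : ENNReal.ofReal N₁ = ∫⁻ x, ENNReal.ofReal ‖g₁ x‖ ∂haarAddCircle :=
      ofReal_integral_eq_lintegral_ofReal hgi₁.norm
        (Filter.Eventually.of_forall fun x => norm_nonneg _)
    have hpt : ∀ x, ENNReal.ofReal ‖g₁ x‖ * ENNReal.ofReal (t ^ (p-2))
        = (if M*t < ‖g x‖ then ENNReal.ofReal ‖g x‖ * ENNReal.ofReal (t ^ (p-2)) else 0) := by
      intro x
      by_cases hx : x ∈ cut
      · rw [if_pos (show M*t < ‖g x‖ from hx), hg1, indicator_of_mem hx]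
      · rw [if_neg (show ¬ M*t < ‖g x‖ from hx), hg1, indicator_of_notMem hx, norm_zero,
          ENNReal.ofReal_zero, zero_mul]
    calc ENNReal.ofReal (2 * (M * (N₁ * (2/t)))) * ENNReal.ofReal (t ^ (p-1))
        = ENNReal.ofReal (2 * (M * (N₁ * (2/t))) * t ^ (p-1)) := by
          rw [← ENNReal.ofReal_mul (by positivity)]
      _ = ENNReal.ofReal (4*M * (N₁ * t ^ (p-2))) := by
          congr 1
          rw [ht2]
          field_simp
          ring
      _ = ENNReal.ofReal (4*M) * (ENNReal.ofReal N₁ * ENNReal.ofReal (t ^ (p-2))) := by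
          rw [ENNReal.ofReal_mul (by positivity : (0:ℝ) ≤ 4*M), ENNReal.ofReal_mul hN₁nn]
      _ = ENNReal.ofReal (4*M) * ∫⁻ x, (if M*t < ‖g x‖ then
            ENNReal.ofReal ‖g x‖ * ENNReal.ofReal (t ^ (p-2)) else 0) ∂haarAddCircle := by
          congr 1
          rw [hN, ← lintegral_mul_const' _ _ ENNReal.ofReal_ne_top]
          exact lintegral_congr fun x => hpt x
  have hterm2 : ENNReal.ofReal ((t/2)⁻¹ ^ 2) * I₂ * ENNReal.ofReal (t ^ (p-1))
      = ENNReal.ofReal 4 * ∫⁻ x, (if M*t < ‖g x‖ then 0 else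
          ENNReal.ofReal (‖g x‖^2) * ENNReal.ofReal (t ^ (p-3))) ∂haarAddCircle := by
    have hpt : ∀ x, ENNReal.ofReal (‖g₂ x‖^2) * ENNReal.ofReal (t ^ (p-3))
        = (if M*t < ‖g x‖ then 0 else
            ENNReal.ofReal (‖g x‖^2) * ENNReal.ofReal (t ^ (p-3))) := by
      intro x
      by_cases hx : x ∈ cut
      · rw [if_pos (show M*t < ‖g x‖ from hx), hg2,
          indicator_of_notMem (by simpa using hx), norm_zero]
        norm_num
      · rw [if_neg (show ¬ M*t < ‖g x‖ from hx), hg2, indicator_of_mem (by simpa using hx)]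
    calc ENNReal.ofReal ((t/2)⁻¹ ^ 2) * I₂ * ENNReal.ofReal (t ^ (p-1))
        = ENNReal.ofReal ((t/2)⁻¹ ^ 2) * ENNReal.ofReal (t ^ (p-1)) * I₂ := by ring
      _ = ENNReal.ofReal (4 * t ^ (p-3)) * I₂ := by
          rw [← ENNReal.ofReal_mul (by positivity)]
          congr 1
          rw [ht3]
          field_simp
          ring
      _ = ENNReal.ofReal 4 * (ENNReal.ofReal (t ^ (p-3)) * I₂) := by
          rw [ENNReal.ofReal_mul (by norm_num), mul_assoc]
      _ = ENNReal.ofReal 4 * ∫⁻ x, (if M*t < ‖g x‖ then 0 else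
            ENNReal.ofReal (‖g x‖^2) * ENNReal.ofReal (t ^ (p-3))) ∂haarAddCircle := by
          congr 1
          rw [hI₂, mul_comm, ← lintegral_mul_const' _ _ ENNReal.ofReal_ne_top]
          exact lintegral_congr fun x => hpt x
  calc (ν {m : ℤ | t < lam m * ‖fourierCoeff g m‖}) * ENNReal.ofReal (t ^ (p-1))
      ≤ (ν {m : ℤ | t/2 < lam m * ‖fourierCoeff g₁ m‖}
          + ν {m : ℤ | t/2 < lam m * ‖fourierCoeff g₂ m‖}) * ENNReal.ofReal (t ^ (p-1)) :=
        mul_le_mul_left ((measure_mono hsub).trans hIoi) _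
    _ = ν {m : ℤ | t/2 < lam m * ‖fourierCoeff g₁ m‖} * ENNReal.ofReal (t ^ (p-1))
        + ν {m : ℤ | t/2 < lam m * ‖fourierCoeff g₂ m‖} * ENNReal.ofReal (t ^ (p-1)) :=
        add_mul _ _ _
    _ ≤ ENNReal.ofReal (2 * (M * (N₁ * (2/t)))) * ENNReal.ofReal (t ^ (p-1))
        + ENNReal.ofReal ((t/2)⁻¹ ^ 2) * I₂ * ENNReal.ofReal (t ^ (p-1)) :=
        add_le_add (mul_le_mul_left hb1 _) (mul_le_mul_left hb2 _)
    _ = _ := by rw [hterm1, hterm2]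

/-- algebra (i) -/
lemma alg_i {p M A : ℝ} (hp1 : 1 < p) (hp2 : p < 2) (hM : 0 < M) (hA : 0 ≤ A) :
    4*M * (A * ((A/M) ^ (p-1) / (p-1))) = 4*(M ^ (2-p)) / (p-1) * A ^ p := by
  rcases hA.eq_or_lt with rfl | hA0
  · rw [Real.zero_rpow (by linarith : p ≠ 0), zero_div,
      Real.zero_rpow (by linarith : p - 1 ≠ 0)]
    ring
  · rw [Real.div_rpow hA hM.le,
      show p = 1 + (p-1) by ring, Real.rpow_add hA0, Real.rpow_one,
      show (2:ℝ) - (1 + (p-1)) = 1 + -(p-1) by ring, Real.rpow_add hM, Real.rpow_one,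
      Real.rpow_neg hM.le]
    have h1 : M ^ (p-1) ≠ 0 := (Real.rpow_pos_of_pos hM _).ne'
    have h2 : p - 1 ≠ 0 := by intro h; rw [show p = 1 + (p-1) by ring, h] at hp1; norm_num at hp1
    field_simp
    try ring
/-- algebra (ii) -/
lemma alg_ii {p M A : ℝ} (hp1 : 1 < p) (hp2 : p < 2) (hM : 0 < M) (hA : 0 ≤ A) :
    4 * (A^2 * ((A/M) ^ (p-2) / (2-p))) = 4*(M ^ (2-p)) / (2-p) * A ^ p := by
  rcases hA.eq_or_lt with rfl | hA0
  · rw [Real.zero_rpow (by linarith : p ≠ 0)]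
    ring
  · have hA2 : A ^ p = A^2 * A ^ (p-2) := by
      rw [show p = ((2:ℕ):ℝ) + (p-2) by norm_num, Real.rpow_add hA0, Real.rpow_natCast]
      norm_num
    rw [Real.div_rpow hA hM.le, hA2,
      show (2:ℝ) - p = -(p-2) by ring, Real.rpow_neg hM.le]
    have h1 : M ^ (p-2) ≠ 0 := (Real.rpow_pos_of_pos hM _).ne'
    have h2 : (2:ℝ) - p ≠ 0 := by linarith
    have h3 : -(p-2) ≠ 0 := by linarith
    field_simp
    try ring

/-- Main estimate (`1 < p < 2`). -/
lemma main_est {p : ℝ} (hp1 : 1 < p) (hp2 : p < 2) {lam : ℤ → ℝ} (hlam : ∀ m, 0 < lam m)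
    {M : ℝ} (hM : 0 < M)
    (hcount : ∀ t : ℝ, 0 < t →
      ENNReal.ofReal t * Measure.count {m : ℤ | t ≤ (lam m)⁻¹} ≤ ENNReal.ofReal M)
    {g : AddCircle (1:ℝ) → ℂ} (hgm : StronglyMeasurable g)
    (hgi : Integrable g haarAddCircle) :
    ∑' m : ℤ, ENNReal.ofReal ((lam m)⁻¹ ^ (2:ℝ))
        * ENNReal.ofReal ((lam m * ‖fourierCoeff g m‖) ^ p)
      ≤ ENNReal.ofReal (p * (M ^ (2-p) * (4/(p-1) + 4/(2-p))))
        * ∫⁻ x, ENNReal.ofReal (‖g x‖ ^ p) ∂haarAddCircle := by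
  set ν := Measure.count.withDensity fun m : ℤ => ENNReal.ofReal ((lam m)⁻¹ ^ (2:ℝ)) with hν
  set b : ℤ → ℝ := fun m => lam m * ‖fourierCoeff g m‖ with hb
  have hb_nn : ∀ m, 0 ≤ b m := fun m => mul_nonneg (hlam m).le (norm_nonneg _)
  -- tsum as weighted lintegral
  have step0 : ∑' m : ℤ, ENNReal.ofReal ((lam m)⁻¹ ^ (2:ℝ)) * ENNReal.ofReal (b m ^ p)
      = ∫⁻ m, ENNReal.ofReal (b m ^ p) ∂ν := by
    rw [hν, lintegral_withDensity_eq_lintegral_mul _ Measurable.of_discrete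
      Measurable.of_discrete, lintegral_count]
    rfl
  -- layer cake
  have step1 : ∫⁻ m, ENNReal.ofReal (b m ^ p) ∂ν
      = ENNReal.ofReal p * ∫⁻ t in Ioi (0:ℝ),
          ν {m : ℤ | t < b m} * ENNReal.ofReal (t ^ (p-1)) :=
    lintegral_rpow_eq_lintegral_meas_lt_mul ν
      (Filter.Eventually.of_forall hb_nn) Measurable.of_discrete.aemeasurable
      (by linarith : 0 < p)
  -- the two kernels
  set Φ : ℝ → AddCircle (1:ℝ) → ℝ≥0∞ := fun t x => if M*t < ‖g x‖ then
      ENNReal.ofReal ‖g x‖ * ENNReal.ofReal (t ^ (p-2)) else 0 with hΦ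
  set Ψ : ℝ → AddCircle (1:ℝ) → ℝ≥0∞ := fun t x => if M*t < ‖g x‖ then 0 else
      ENNReal.ofReal (‖g x‖^2) * ENNReal.ofReal (t ^ (p-3)) with hΨ
  have hΦm : Measurable (Function.uncurry Φ) := by
    apply Measurable.ite
    · exact measurableSet_lt (measurable_fst.const_mul M)
        (hgm.measurable.norm.comp measurable_snd)
    · exact (ENNReal.measurable_ofReal.comp (hgm.measurable.norm.comp measurable_snd)).mul
        (ENNReal.measurable_ofReal.comp (by fun_prop : Measurable fun z : ℝ × AddCircle (1:ℝ)
          => z.1 ^ (p-2)))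
    · exact measurable_const
  have hΨm : Measurable (Function.uncurry Ψ) := by
    apply Measurable.ite
    · exact measurableSet_lt (measurable_fst.const_mul M)
        (hgm.measurable.norm.comp measurable_snd)
    · exact measurable_const
    · exact (ENNReal.measurable_ofReal.comp
        ((hgm.measurable.norm.comp measurable_snd).pow_const 2)).mul
        (ENNReal.measurable_ofReal.comp (by fun_prop : Measurable fun z : ℝ × AddCircle (1:ℝ)
          => z.1 ^ (p-3)))
  -- step 2 : per-t bound
  have step2 : ∫⁻ t in Ioi (0:ℝ), ν {m : ℤ | t < b m} * ENNReal.ofReal (t ^ (p-1))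
      ≤ ∫⁻ t in Ioi (0:ℝ), (ENNReal.ofReal (4*M) * ∫⁻ x, Φ t x ∂haarAddCircle
          + ENNReal.ofReal 4 * ∫⁻ x, Ψ t x ∂haarAddCircle) := by
    refine lintegral_mono_ae ((ae_restrict_iff' measurableSet_Ioi).2
      (Filter.Eventually.of_forall fun t ht => ?_))
    exact per_t hp1 hlam hM hcount hgm hgi ht
  -- split the sum and pull out the constants
  have step3 : ∫⁻ t in Ioi (0:ℝ), (ENNReal.ofReal (4*M) * ∫⁻ x, Φ t x ∂haarAddCircle
          + ENNReal.ofReal 4 * ∫⁻ x, Ψ t x ∂haarAddCircle)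
      = ENNReal.ofReal (4*M) * (∫⁻ t in Ioi (0:ℝ), ∫⁻ x, Φ t x ∂haarAddCircle)
        + ENNReal.ofReal 4 * (∫⁻ t in Ioi (0:ℝ), ∫⁻ x, Ψ t x ∂haarAddCircle) := by
    rw [lintegral_add_left (f := fun t => ENNReal.ofReal (4*M) * ∫⁻ x, Φ t x ∂haarAddCircle)
        (hΦm.lintegral_prod_right.const_mul _),
      lintegral_const_mul' _ _ ENNReal.ofReal_ne_top,
      lintegral_const_mul' _ _ ENNReal.ofReal_ne_top]
  -- Tonelli
  have swapΦ : ∫⁻ t in Ioi (0:ℝ), ∫⁻ x, Φ t x ∂haarAddCircle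
      = ∫⁻ x, (∫⁻ t in Ioi (0:ℝ), Φ t x) ∂haarAddCircle :=
    lintegral_lintegral_swap hΦm.aemeasurable
  have swapΨ : ∫⁻ t in Ioi (0:ℝ), ∫⁻ x, Ψ t x ∂haarAddCircle
      = ∫⁻ x, (∫⁻ t in Ioi (0:ℝ), Ψ t x) ∂haarAddCircle :=
    lintegral_lintegral_swap hΨm.aemeasurable
  -- inner integrals
  have hJ1 : ∀ x : AddCircle (1:ℝ), ∫⁻ t in Ioi (0:ℝ), Φ t x
      = ENNReal.ofReal (‖g x‖ * ((‖g x‖/M) ^ (p-1) / (p-1))) := by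
    intro x
    set A := ‖g x‖ with hA
    have hA0 : 0 ≤ A := norm_nonneg _
    have hpt : ∀ t ∈ Ioi (0:ℝ), Φ t x
        = (Ioo (0:ℝ) (A/M)).indicator (fun t => ENNReal.ofReal A * ENNReal.ofReal (t ^ (p-2))) t := by
      intro t ht
      by_cases h : M*t < A
      · rw [hΦ]
        simp only []
        rw [if_pos h, indicator_of_mem (show t ∈ Ioo (0:ℝ) (A/M) from
          ⟨ht, (lt_div_iff₀ hM).mpr (by rwa [mul_comm] at h)⟩)]
      · rw [hΦ]
        simp only []
        rw [if_neg h, indicator_of_notMem]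
        intro hmem
        exact h (by rw [mul_comm]; exact (lt_div_iff₀ hM).mp hmem.2)
    calc ∫⁻ t in Ioi (0:ℝ), Φ t x
        = ∫⁻ t in Ioi (0:ℝ),
            (Ioo (0:ℝ) (A/M)).indicator
              (fun t => ENNReal.ofReal A * ENNReal.ofReal (t ^ (p-2))) t :=
          lintegral_congr_ae ((ae_restrict_iff' measurableSet_Ioi).2
            (Filter.Eventually.of_forall hpt))
      _ = ∫⁻ t in Ioo (0:ℝ) (A/M), ENNReal.ofReal A * ENNReal.ofReal (t ^ (p-2)) := by
          rw [lintegral_indicator measurableSet_Ioo, Measure.restrict_restrict measurableSet_Ioo,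
            inter_eq_self_of_subset_left Ioo_subset_Ioi_self]
      _ = ENNReal.ofReal A * ∫⁻ t in Ioo (0:ℝ) (A/M), ENNReal.ofReal (t ^ (p-2)) :=
          lintegral_const_mul' _ _ ENNReal.ofReal_ne_top
      _ = ENNReal.ofReal A * ENNReal.ofReal ((A/M) ^ (p-1) / (p-1)) := by
          rw [lint_Ioo (by linarith : (-1:ℝ) < p-2) (by positivity : (0:ℝ) ≤ A/M),
            show p-2+1 = p-1 by ring]
      _ = ENNReal.ofReal (A * ((A/M) ^ (p-1) / (p-1))) := (ENNReal.ofReal_mul hA0).symm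
  have hJ2 : ∀ x : AddCircle (1:ℝ), ∫⁻ t in Ioi (0:ℝ), Ψ t x
      = ENNReal.ofReal (‖g x‖^2 * ((‖g x‖/M) ^ (p-2) / (2-p))) := by
    intro x
    set A := ‖g x‖ with hA
    have hA0 : 0 ≤ A := norm_nonneg _
    rcases hA0.eq_or_lt with h0 | hApos
    · have : ∀ t, Ψ t x = 0 := by
        intro t
        rw [hΨ]
        simp only []
        rw [← hA, ← h0]
        split
        · rfl
        · norm_num
      simp only [this, lintegral_zero, ← hA, ← h0]
      norm_num
    · have hpt : ∀ t ∈ Ioi (0:ℝ), Ψ t x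
          = (Ici (A/M)).indicator
            (fun t => ENNReal.ofReal (A^2) * ENNReal.ofReal (t ^ (p-3))) t := by
        intro t ht
        by_cases h : M*t < A
        · rw [hΨ]
          simp only []
          rw [if_pos h, indicator_of_notMem]
          intro hmem
          have h2 : A ≤ M*t := by
            rw [mul_comm]
            exact (div_le_iff₀ hM).mp hmem
          exact absurd h (not_lt.mpr h2)
        · rw [hΨ]
          simp only []
          rw [if_neg h, indicator_of_mem]
          show A/M ≤ t
          rw [div_le_iff₀ hM, mul_comm]
          exact not_lt.mp h
      calc ∫⁻ t in Ioi (0:ℝ), Ψ t x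
          = ∫⁻ t in Ioi (0:ℝ),
              (Ici (A/M)).indicator
                (fun t => ENNReal.ofReal (A^2) * ENNReal.ofReal (t ^ (p-3))) t :=
            lintegral_congr_ae ((ae_restrict_iff' measurableSet_Ioi).2
              (Filter.Eventually.of_forall hpt))
        _ = ∫⁻ t in Ici (A/M), ENNReal.ofReal (A^2) * ENNReal.ofReal (t ^ (p-3)) := by
            rw [lintegral_indicator measurableSet_Ici, Measure.restrict_restrict measurableSet_Ici,
              inter_eq_self_of_subset_left (show Ici (A/M) ⊆ Ioi 0 from
                fun t ht => lt_of_lt_of_le (show (0:ℝ) < A/M by positivity) ht)]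
        _ = ENNReal.ofReal (A^2) * ∫⁻ t in Ici (A/M), ENNReal.ofReal (t ^ (p-3)) :=
            lintegral_const_mul' _ _ ENNReal.ofReal_ne_top
        _ = ENNReal.ofReal (A^2) * ENNReal.ofReal ((A/M) ^ (p-2) / (2-p)) := by
            rw [lint_Ici (by linarith : p-3 < -1) (by positivity : (0:ℝ) < A/M),
              show p-3+1 = p-2 by ring, show -(p-2) = 2-p by ring]
        _ = ENNReal.ofReal (A^2 * ((A/M) ^ (p-2) / (2-p))) := (ENNReal.ofReal_mul (by positivity)).symm
  -- final assembly
  set Ip := ∫⁻ x, ENNReal.ofReal (‖g x‖ ^ p) ∂haarAddCircle with hIp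
  have final1 : ENNReal.ofReal (4*M) * ∫⁻ x, (∫⁻ t in Ioi (0:ℝ), Φ t x) ∂haarAddCircle
      = ENNReal.ofReal (4*(M ^ (2-p)) / (p-1)) * Ip := by
    simp_rw [hJ1]
    rw [← lintegral_const_mul' _ _ ENNReal.ofReal_ne_top, hIp,
      ← lintegral_const_mul' _ _ ENNReal.ofReal_ne_top]
    apply lintegral_congr
    intro x
    rw [← ENNReal.ofReal_mul (by positivity : (0:ℝ) ≤ 4*M),
      ← ENNReal.ofReal_mul (div_nonneg (by positivity) (by linarith : (0:ℝ) ≤ p-1)),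
      alg_i hp1 hp2 hM (norm_nonneg (g x))]
  have final2 : ENNReal.ofReal 4 * ∫⁻ x, (∫⁻ t in Ioi (0:ℝ), Ψ t x) ∂haarAddCircle
      = ENNReal.ofReal (4*(M ^ (2-p)) / (2-p)) * Ip := by
    simp_rw [hJ2]
    rw [← lintegral_const_mul' _ _ ENNReal.ofReal_ne_top, hIp,
      ← lintegral_const_mul' _ _ ENNReal.ofReal_ne_top]
    apply lintegral_congr
    intro x
    rw [← ENNReal.ofReal_mul (by norm_num : (0:ℝ) ≤ 4),
      ← ENNReal.ofReal_mul (div_nonneg (by positivity) (by linarith : (0:ℝ) ≤ 2-p)),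
      alg_ii hp1 hp2 hM (norm_nonneg (g x))]
  calc ∑' m : ℤ, ENNReal.ofReal ((lam m)⁻¹ ^ (2:ℝ)) * ENNReal.ofReal ((lam m * ‖fourierCoeff g m‖) ^ p)
      = ENNReal.ofReal p * ∫⁻ t in Ioi (0:ℝ),
          ν {m : ℤ | t < b m} * ENNReal.ofReal (t ^ (p-1)) := by rw [← step1, ← step0]
    _ ≤ ENNReal.ofReal p * (ENNReal.ofReal (4*M) * (∫⁻ t in Ioi (0:ℝ), ∫⁻ x, Φ t x ∂haarAddCircle)
        + ENNReal.ofReal 4 * (∫⁻ t in Ioi (0:ℝ), ∫⁻ x, Ψ t x ∂haarAddCircle)) := by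
        rw [← step3]
        exact mul_le_mul_right step2 _
    _ = ENNReal.ofReal p * (ENNReal.ofReal (4*(M ^ (2-p)) / (p-1)) * Ip
        + ENNReal.ofReal (4*(M ^ (2-p)) / (2-p)) * Ip) := by
        rw [swapΦ, swapΨ, final1, final2]
    _ = ENNReal.ofReal p * ENNReal.ofReal (4*(M ^ (2-p)) / (p-1) + 4*(M ^ (2-p)) / (2-p)) * Ip := by
        rw [← add_mul, ← ENNReal.ofReal_add
          (div_nonneg (by positivity) (by linarith : (0:ℝ) ≤ p-1))
          (div_nonneg (by positivity) (by linarith : (0:ℝ) ≤ 2-p)), ← mul_assoc]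
    _ = ENNReal.ofReal (p * (M ^ (2-p) * (4/(p-1) + 4/(2-p)))) * Ip := by
        have hre : 4*(M ^ (2-p)) / (p-1) + 4*(M ^ (2-p)) / (2-p)
            = M ^ (2-p) * (4/(p-1) + 4/(2-p)) := by
          ring
        rw [hre, ← ENNReal.ofReal_mul (by linarith : (0:ℝ) ≤ p)]

end PaleyAux

open PaleyAux

/-- Paley inequality on the circle: for `1 < p ≤ 2`, positive `(λ_m)` with
`M = sup_{t>0} t·#{m : λ_m⁻¹ ≥ t} < ∞`, one has
`(Σ_m |f̂(m)|^p λ_m^{−(2−p)})^{1/p} ≤ C·M^{(2−p)/p}·‖f‖_{L^p(𝕋)}`. -/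
theorem paley_inequality_circle (p : ℝ) (hp1 : 1 < p) (hp2 : p ≤ 2) :
    ∃ C > (0 : ℝ), ∀ (lam : ℤ → ℝ), (∀ m, 0 < lam m) → ∀ (M : ℝ), 0 < M →
      (∀ t : ℝ, 0 < t →
        ENNReal.ofReal t * Measure.count {m : ℤ | t ≤ (lam m)⁻¹} ≤ ENNReal.ofReal M) →
      ∀ f : AddCircle (1 : ℝ) → ℂ,
        MemLp f (ENNReal.ofReal p) AddCircle.haarAddCircle →
        (∑' m : ℤ, (‖fourierCoeff f m‖₊ : ℝ≥0∞) ^ p *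
            ENNReal.ofReal ((lam m)⁻¹ ^ (2 - p))) ^ (1 / p) ≤
          ENNReal.ofReal (C * M ^ ((2 - p) / p)) *
            eLpNorm f (ENNReal.ofReal p) AddCircle.haarAddCircle := by
  have hp0 : (0:ℝ) < p := by linarith
  set C : ℝ := max 1 ((p * (4/(p-1) + 4/(2-p))) ^ (1/p)) with hC
  refine ⟨C, lt_of_lt_of_le one_pos (le_max_left _ _), ?_⟩
  intro lam hlam M hM hcount f hf
  -- replace f by a strongly measurable representative g
  set g : AddCircle (1:ℝ) → ℂ := hf.aestronglyMeasurable.mk f with hg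
  have hgm : StronglyMeasurable g := hf.aestronglyMeasurable.stronglyMeasurable_mk
  have hfg : f =ᵐ[haarAddCircle] g := hf.aestronglyMeasurable.ae_eq_mk
  have hgL : MemLp g (ENNReal.ofReal p) haarAddCircle := hf.ae_eq hfg
  have hcoeff : ∀ m : ℤ, fourierCoeff f m = fourierCoeff g m :=
    fun m => fourierCoeff_congr_ae hfg m
  have help : eLpNorm f (ENNReal.ofReal p) haarAddCircle
      = eLpNorm g (ENNReal.ofReal p) haarAddCircle := eLpNorm_congr_ae hfg
  simp_rw [hcoeff, help]
  -- basic exponent facts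
  have hq0 : (ENNReal.ofReal p) ≠ 0 := by
    simp only [ne_eq, ENNReal.ofReal_eq_zero, not_le]; exact hp0
  have hqt : (ENNReal.ofReal p) ≠ ∞ := ENNReal.ofReal_ne_top
  have hqr : (ENNReal.ofReal p).toReal = p := ENNReal.toReal_ofReal hp0.le
  have hnn_coe : ∀ c : ℂ, ((‖c‖₊ : ℝ≥0∞)) ^ p = ENNReal.ofReal (‖c‖ ^ p) := by
    intro c
    rw [← ENNReal.ofReal_coe_nnreal, coe_nnnorm, ENNReal.ofReal_rpow_of_nonneg (norm_nonneg _) hp0.le]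
  have hsnorm : eLpNorm g (ENNReal.ofReal p) haarAddCircle
      = (∫⁻ x, ENNReal.ofReal (‖g x‖ ^ p) ∂haarAddCircle) ^ (1/p) := by
    rw [eLpNorm_eq_lintegral_rpow_enorm_toReal hq0 hqt, hqr]
    congr 1
    exact lintegral_congr fun x => hnn_coe (g x)
  rcases eq_or_lt_of_le hp2 with hpe | hps
  · -- p = 2 : Parseval
    subst hpe
    have h2 : (ENNReal.ofReal (2:ℝ)) = 2 := by
      rw [show ((2:ℝ)) = ((2:ℕ):ℝ) by norm_num]
      simp
    have hLHS : (∑' m : ℤ, (‖fourierCoeff g m‖₊ : ℝ≥0∞) ^ (2:ℝ) *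
        ENNReal.ofReal ((lam m)⁻¹ ^ ((2:ℝ) - 2)))
        = ∫⁻ x, ENNReal.ofReal (‖g x‖ ^ (2:ℝ)) ∂haarAddCircle := by
      have : ∀ m : ℤ, (‖fourierCoeff g m‖₊ : ℝ≥0∞) ^ (2:ℝ) *
          ENNReal.ofReal ((lam m)⁻¹ ^ ((2:ℝ) - 2))
          = ENNReal.ofReal (‖fourierCoeff g m‖ ^ 2) := by
        intro m
        rw [show (2:ℝ) - 2 = 0 by ring, Real.rpow_zero, ENNReal.ofReal_one, mul_one,
          hnn_coe]
        congr 1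
        rw [show ((2:ℝ)) = ((2:ℕ):ℝ) by norm_num, Real.rpow_natCast]
      simp_rw [this]
      rw [parseval_ennreal (h2 ▸ hgL)]
      apply lintegral_congr
      intro x
      congr 1
      rw [show ((2:ℝ)) = ((2:ℕ):ℝ) by norm_num, Real.rpow_natCast]
    rw [hLHS, hsnorm]
    have hC1 : (1:ℝ≥0∞) ≤ ENNReal.ofReal (C * M ^ (((2:ℝ) - 2) / 2)) := by
      rw [show ((2:ℝ)-2)/2 = 0 by ring, Real.rpow_zero, mul_one]
      exact ENNReal.one_le_ofReal.mpr (le_max_left _ _)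
    exact le_mul_of_one_le_left (zero_le) hC1
  · -- 1 < p < 2
    have hgi : Integrable g haarAddCircle := by
      rw [← memLp_one_iff_integrable]
      refine hgL.mono_exponent ?_
      rw [show (1:ℝ≥0∞) = ENNReal.ofReal 1 from ENNReal.ofReal_one.symm]
      exact ENNReal.ofReal_le_ofReal hp1.le
    -- rewrite terms
    have hterm : ∀ m : ℤ, (‖fourierCoeff g m‖₊ : ℝ≥0∞) ^ p *
        ENNReal.ofReal ((lam m)⁻¹ ^ (2 - p))
        = ENNReal.ofReal ((lam m)⁻¹ ^ (2:ℝ))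
          * ENNReal.ofReal ((lam m * ‖fourierCoeff g m‖) ^ p) := by
      intro m
      have hL := hlam m
      set a := ‖fourierCoeff g m‖ with ha
      have ha0 : 0 ≤ a := norm_nonneg _
      rw [hnn_coe, ← ENNReal.ofReal_mul (Real.rpow_nonneg ha0 p),
        ← ENNReal.ofReal_mul (Real.rpow_nonneg (inv_nonneg.mpr hL.le) 2)]
      congr 1
      rw [Real.mul_rpow hL.le ha0, Real.inv_rpow hL.le, Real.inv_rpow hL.le]
      have hne : ∀ y : ℝ, lam m ^ y ≠ 0 := fun y => (Real.rpow_pos_of_pos hL y).ne'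
      have hfact : lam m ^ (2:ℝ) = lam m ^ (2-p) * lam m ^ p := by
        rw [← Real.rpow_add hL]
        norm_num
      field_simp [hfact]
      rw [hfact]
      ring
    simp_rw [hterm]
    -- apply the main estimate and take p-th roots
    have hmain := main_est hp1 hps hlam hM hcount hgm hgi
    have hroot := ENNReal.rpow_le_rpow hmain (by positivity : (0:ℝ) ≤ 1/p)
    rw [ENNReal.mul_rpow_of_nonneg _ _ (by positivity : (0:ℝ) ≤ 1/p)] at hroot
    refine hroot.trans ?_
    rw [hsnorm]
    apply mul_le_mul_left
    -- constant manipulation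
    have hK0 : (0:ℝ) ≤ p * (M ^ (2-p) * (4/(p-1) + 4/(2-p))) := by
      have : (0:ℝ) ≤ 4/(p-1) + 4/(2-p) :=
        add_nonneg (div_nonneg (by norm_num) (by linarith)) (div_nonneg (by norm_num) (by linarith))
      positivity
    rw [ENNReal.ofReal_rpow_of_nonneg hK0 (by positivity : (0:ℝ) ≤ 1/p)]
    apply ENNReal.ofReal_le_ofReal
    have hS0 : (0:ℝ) ≤ p * (4/(p-1) + 4/(2-p)) := by
      have : (0:ℝ) ≤ 4/(p-1) + 4/(2-p) :=
        add_nonneg (div_nonneg (by norm_num) (by linarith)) (div_nonneg (by norm_num) (by linarith))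
      positivity
    calc (p * (M ^ (2-p) * (4/(p-1) + 4/(2-p)))) ^ (1/p)
        = ((p * (4/(p-1) + 4/(2-p))) * M ^ (2-p)) ^ (1/p) := by ring_nf
      _ = (p * (4/(p-1) + 4/(2-p))) ^ (1/p) * (M ^ (2-p)) ^ (1/p) :=
          Real.mul_rpow hS0 (Real.rpow_nonneg hM.le _)
      _ = (p * (4/(p-1) + 4/(2-p))) ^ (1/p) * M ^ ((2-p)/p) := by
          rw [← Real.rpow_mul hM.le]
          congr 1
          field_simp
      _ ≤ C * M ^ ((2-p)/p) := by
          apply mul_le_mul_of_nonneg_right (le_max_right _ _) (Real.rpow_nonneg hM.le _)
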